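/- Spherical Maxwell-Cremona, lift to reciprocal: let (Γ,p) be a framework in S² with a weak polyhedral lift p̃_i = a_i p_i (a_i ≠ 0), such that for each face α the points {p̃_i : i ∈ α} lie in an affine plane M_α = {x : ⟨m̃_α, x⟩ = 1} not through the origin. Then for every dual pair (αβ, ij) the vector m̃_β − m̃_α is orthogonal to both p_i and p_j; consequently, setting m_α = m̃_α/‖m̃_α‖, the great-circle arcs m_α m_β and p_i p_j are perpendicular (⟨m_α × m_β, p_i × p_j⟩ = 0) and ⟨m_α, p_i⟩ ≠ 0 for every incident pair (α,i). -/

import Mathlib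

open scoped Matrix

/-- Spherical Maxwell–Cremona, lift to reciprocal: let `(Γ, p)` be a
framework in `S²` with a weak polyhedral lift `p̃ i = a i • p i` (`a i ≠ 0`) such that for
each face `α` the lifted vertices of `α` lie in the affine plane `{x | ⟨m̃ α, x⟩ = 1}`
(not through the origin, `m̃ α ≠ 0`). Then for every dual pair `(αβ, ij)` the vector
`m̃ β − m̃ α` is orthogonal to both `p i` and `p j`; consequently, with
`m α = m̃ α / ‖m̃ α‖`, the great circles `m α m β` and `p i p j` are perpendicular
(`⟨m α ×₃ m β, p i ×₃ p j⟩ = 0`), and `⟨m α, p i⟩ ≠ 0` for every incident pair. -/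
theorem spherical_maxwell_cremona_lift_to_reciprocal
    {V F : Type*} (Γ : SimpleGraph V)
    (mem : F → V → Prop)
    (dualPair : F → F → V → V → Prop)
    (hdual : ∀ α β i j, dualPair α β i j →
      Γ.Adj i j ∧ mem α i ∧ mem α j ∧ mem β i ∧ mem β j)
    (p : V → Fin 3 → ℝ)
    (hsphere : ∀ i, p i ⬝ᵥ p i = 1)
    (hframe : ∀ i j, Γ.Adj i j → p i ≠ p j ∧ p i ≠ -p j)
    (a : V → ℝ) (ha : ∀ i, a i ≠ 0)
    (mt : F → Fin 3 → ℝ) (hmt : ∀ α, mt α ≠ 0)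
    (hplane : ∀ α i, mem α i → mt α ⬝ᵥ (a i • p i) = 1)
    (m : F → Fin 3 → ℝ)
    (hm : ∀ α, m α = (Real.sqrt (mt α ⬝ᵥ mt α))⁻¹ • mt α) :
    (∀ α β i j, dualPair α β i j →
      (mt β - mt α) ⬝ᵥ p i = 0 ∧ (mt β - mt α) ⬝ᵥ p j = 0 ∧
      (m α ⨯₃ m β) ⬝ᵥ (p i ⨯₃ p j) = 0) ∧
    (∀ α i, mem α i → m α ⬝ᵥ p i ≠ 0) := by
  -- basic facts
  have key : ∀ α i, mem α i → mt α ⬝ᵥ p i = (a i)⁻¹ := by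
    intro α i hi
    have h := hplane α i hi
    rw [dotProduct_smul, smul_eq_mul] at h
    exact eq_inv_of_mul_eq_one_right h
  have hsq : ∀ α, (0:ℝ) < mt α ⬝ᵥ mt α := by
    intro α
    have := dotProduct_self_eq_zero (v := mt α)
    have hnn : 0 ≤ mt α ⬝ᵥ mt α := by simpa using dotProduct_self_star_nonneg (mt α)
    rcases lt_or_eq_of_le hnn with h | h
    · exact h
    · exact absurd (this.mp h.symm) (hmt α)
  have hc : ∀ α, (Real.sqrt (mt α ⬝ᵥ mt α))⁻¹ ≠ 0 := by
    intro α
    exact inv_ne_zero (ne_of_gt (Real.sqrt_pos.mpr (hsq α)))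
  constructor
  · intro α β i j hd
    obtain ⟨hadj, hαi, hαj, hβi, hβj⟩ := hdual α β i j hd
    have h1 : (mt β - mt α) ⬝ᵥ p i = 0 := by
      rw [sub_dotProduct, key β i hβi, key α i hαi, sub_self]
    have h2 : (mt β - mt α) ⬝ᵥ p j = 0 := by
      rw [sub_dotProduct, key β j hβj, key α j hαj, sub_self]
    refine ⟨h1, h2, ?_⟩
    rw [hm α, hm β]
    have := cross_dot_cross ((Real.sqrt (mt α ⬝ᵥ mt α))⁻¹ • mt α)
      ((Real.sqrt (mt β ⬝ᵥ mt β))⁻¹ • mt β) (p i) (p j)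
    rw [this]
    rw [smul_dotProduct, smul_dotProduct, smul_dotProduct,
      smul_dotProduct, key α i hαi, key α j hαj, key β i hβi, key β j hβj]
    simp only [smul_eq_mul]
    ring
  · intro α i hi
    rw [hm α, smul_dotProduct, key α i hi, smul_eq_mul]
    exact mul_ne_zero (hc α) (inv_ne_zero (ha i))
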